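/- arXiv:1502.04604 — 3 statements merged into one kernel-verified Lean document; each statement's English description precedes it below -/
import Mathlib

section
/- (AMDCT VII discrete orthogonality) Let N, n ≥ 1 and let k, k' ∈ D_N^−, i.e., integer vectors with N−1 ≥ k_1 > … > k_n ≥ 0 and N−1 ≥ k'_1 > … > k'_n ≥ 0. Then Σ_{r ∈ D_N^−} (∏_{i=1}^n c_{r_i}) · cos⁻_{k+ρ}(2r_1/(2N−1), …, 2r_n/(2N−1)) · cos⁻_{k'+ρ}(2r_1/(2N−1), …, 2r_n/(2N−1)) = (d̃_k)^{−1} · ((2N−1)/4)^n · δ_{k,k'}, where ρ = (1/2,…,1/2). -/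
open Real Finset

/-- The antisymmetric multivariate cosine function
`cos⁻_λ(x) = Σ_{σ ∈ S_n} sgn(σ) ∏_{i=1}^n cos(π λ_{σ(i)} x_i)`. -/
noncomputable def cosMinus (n : ℕ) (lam x : Fin n → ℝ) : ℝ :=
  ∑ σ : Equiv.Perm (Fin n),
    ((Equiv.Perm.sign σ : ℤ) : ℝ) * ∏ i : Fin n, Real.cos (Real.pi * lam (σ i) * x i)

/-- The coefficient `c_r`: `1/2` if `r = 0` or `r = N`, and `1` otherwise. -/
noncomputable def cc (N r : ℕ) : ℝ := if r = 0 ∨ r = N then 1 / 2 else 1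

lemma sum_cos_geom (M : ℕ) (hM : 1 ≤ M) (m : ℤ) :
    ∑ r ∈ Finset.range M, Real.cos (2 * Real.pi * m * r / M) =
      if (M : ℤ) ∣ m then (M : ℝ) else 0 := by
  have hM0 : (M : ℝ) ≠ 0 := Nat.cast_ne_zero.mpr (by omega)
  have hM0c : (M : ℂ) ≠ 0 := Nat.cast_ne_zero.mpr (by omega)
  set z : ℂ := Complex.exp ((2 * Real.pi * m / M : ℝ) * Complex.I) with hz
  have hzr : ∀ r : ℕ, z ^ r = Complex.exp ((2 * Real.pi * m * r / M : ℝ) * Complex.I) := by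
    intro r
    rw [hz, ← Complex.exp_nat_mul]
    congr 1
    push_cast
    ring
  have hsum : ∑ r ∈ Finset.range M, Real.cos (2 * Real.pi * m * r / M)
      = (∑ r ∈ Finset.range M, z ^ r).re := by
    rw [Complex.re_sum]
    exact Finset.sum_congr rfl fun r _ => by rw [hzr r, Complex.exp_ofReal_mul_I_re]
  rw [hsum]
  by_cases hdvd : (M : ℤ) ∣ m
  · obtain ⟨c, hc⟩ := hdvd
    have hz1 : z = 1 := by
      rw [hz]
      have h1 : ((2 * Real.pi * m / M : ℝ) : ℂ) * Complex.I = (c : ℤ) * (2 * Real.pi * Complex.I) := by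
        push_cast [hc]
        field_simp
      rw [h1]
      exact Complex.exp_int_mul_two_pi_mul_I c
    have hd : (M:ℤ) ∣ m := ⟨c, hc⟩
    simp [hz1, hd]
  · have hz1 : z ≠ 1 := by
      intro h
      rw [hz, Complex.exp_eq_one_iff] at h
      obtain ⟨c, hc⟩ := h
      apply hdvd
      have h3 : (2 * Real.pi * m / M : ℝ) = c * (2 * Real.pi) := by
        have h2 := mul_right_cancel₀ Complex.I_ne_zero
          (hc.trans (show ((c:ℂ)) * (2 * (Real.pi:ℂ) * Complex.I)
            = (((c : ℝ) * (2 * Real.pi) : ℝ) : ℂ) * Complex.I by push_cast; ring))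
        exact_mod_cast h2
      rw [div_eq_iff hM0] at h3
      have h4 : (m:ℝ) = c * M :=
        mul_left_cancel₀ (show (2*Real.pi) ≠ 0 by positivity) (by linear_combination h3)
      have h5 : m = c * M := by exact_mod_cast h4
      exact ⟨c, by rw [h5]; ring⟩
    have hzM : z ^ M = 1 := by
      rw [hzr M]
      have : ((2 * Real.pi * m * M / M : ℝ) : ℂ) * Complex.I = (m : ℤ) * (2 * Real.pi * Complex.I) := by
        push_cast
        field_simp
      rw [this]
      exact Complex.exp_int_mul_two_pi_mul_I m
    rw [geom_sum_eq hz1, hzM]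
    simp [hdvd]

lemma sum_cos_half (N : ℕ) (hN : 1 ≤ N) (m : ℤ) :
    (∑ r ∈ Finset.range N, Real.cos (2 * Real.pi * m * r / ((2*N-1 : ℕ) : ℝ))) - 1/2 =
      if ((2*N-1 : ℕ) : ℤ) ∣ m then ((2*N-1 : ℕ) : ℝ) / 2 else 0 := by
  set M := 2*N-1 with hMdef
  have hM : 1 ≤ M := by omega
  have hM0 : (M : ℝ) ≠ 0 := Nat.cast_ne_zero.mpr (by omega)
  set g : ℕ → ℝ := fun r => Real.cos (2 * Real.pi * m * r / (M : ℝ)) with hg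
  have hrefl : ∀ r ∈ Finset.Ico N M, g r = g (M - r) := by
    intro r hr
    rw [Finset.mem_Ico] at hr
    have hle : r ≤ M := le_of_lt hr.2
    have hcast : ((M - r : ℕ) : ℝ) = (M : ℝ) - r := by
      push_cast [Nat.cast_sub hle]; ring
    rw [hg]
    simp only
    rw [hcast]
    have harg : 2 * Real.pi * m * ((M:ℝ) - r) / M = (m : ℤ) * (2 * Real.pi) - 2 * Real.pi * m * r / M := by
      field_simp
    rw [harg, Real.cos_int_mul_two_pi_sub]
  have hIco : ∑ r ∈ Finset.Ico N M, g r = ∑ r ∈ Finset.Ico 1 N, g r := by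
    refine Finset.sum_nbij' (fun r => M - r) (fun r => M - r) ?_ ?_ ?_ ?_ ?_ <;>
      (try intro a ha) <;> simp only [Finset.mem_Ico] at * <;> try omega
    exact hrefl a ha
  have hsplit : ∑ r ∈ Finset.range M, g r = ∑ r ∈ Finset.range N, g r + ∑ r ∈ Finset.Ico N M, g r := by
    rw [Finset.range_eq_Ico, Finset.range_eq_Ico]
    exact (Finset.sum_Ico_consecutive g (Nat.zero_le N) (by omega : N ≤ M)).symm
  have hbot : ∑ r ∈ Finset.range N, g r = g 0 + ∑ r ∈ Finset.Ico 1 N, g r := by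
    rw [Finset.range_eq_Ico]
    exact Finset.sum_eq_sum_Ico_succ_bot hN g
  have hg0 : g 0 = 1 := by simp [hg]
  have hfull : ∑ r ∈ Finset.range M, g r = 2 * (∑ r ∈ Finset.range N, g r) - 1 := by
    rw [hsplit, hIco]
    rw [hbot, hg0]
    ring
  have := sum_cos_geom M hM m
  rw [hfull] at this
  by_cases hd : ((M:ℕ) : ℤ) ∣ m
  · rw [if_pos hd] at this ⊢
    linarith
  · rw [if_neg hd] at this ⊢
    linarith

lemma oneD (N : ℕ) (hN : 1 ≤ N) (a b : ℕ) (ha : a < N) (hb : b < N) :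
    ∑ s ∈ Finset.range N,
      cc N s * Real.cos (Real.pi * ((a:ℝ) + 1/2) * (2 * s / (2*(N:ℝ)-1))) *
        Real.cos (Real.pi * ((b:ℝ) + 1/2) * (2 * s / (2*(N:ℝ)-1)))
    = ((2*(N:ℝ)-1)/4) * (cc N (a+1))⁻¹ * (if a = b then 1 else 0) := by
  have hMcast : ((2*N-1 : ℕ) : ℝ) = 2*(N:ℝ)-1 := by
    push_cast [Nat.cast_sub (by omega : 1 ≤ 2*N)]; ring
  set A : ℕ → ℝ := fun s =>
    Real.cos (Real.pi * ((a:ℝ) + 1/2) * (2 * s / (2*(N:ℝ)-1))) *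
      Real.cos (Real.pi * ((b:ℝ) + 1/2) * (2 * s / (2*(N:ℝ)-1))) with hA
  have h1 : ∑ s ∈ Finset.range N, cc N s *
      Real.cos (Real.pi * ((a:ℝ) + 1/2) * (2 * s / (2*(N:ℝ)-1))) *
        Real.cos (Real.pi * ((b:ℝ) + 1/2) * (2 * s / (2*(N:ℝ)-1)))
      = (∑ s ∈ Finset.range N, A s) - 1/2 := by
    have hterm : ∀ s ∈ Finset.range N, cc N s *
        Real.cos (Real.pi * ((a:ℝ) + 1/2) * (2 * s / (2*(N:ℝ)-1))) *
          Real.cos (Real.pi * ((b:ℝ) + 1/2) * (2 * s / (2*(N:ℝ)-1)))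
        = A s - (if s = 0 then (1:ℝ)/2 else 0) := by
      intro s hs
      rw [Finset.mem_range] at hs
      by_cases h0 : s = 0
      · subst h0
        simp [cc, hA]
        norm_num
      · have hccs : cc N s = 1 := by
          simp only [cc]; rw [if_neg (by omega)]
        rw [hccs, if_neg h0, hA]; ring
    rw [Finset.sum_congr rfl hterm, Finset.sum_sub_distrib,
      Finset.sum_ite_eq' (Finset.range N) 0 (fun _ => (1:ℝ)/2),
      if_pos (Finset.mem_range.mpr (by omega : 0 < N))]
  rw [h1]
  have h2 : ∀ s : ℕ, A s =
      (Real.cos (2 * Real.pi * (((a:ℤ) - b : ℤ) : ℝ) * s / ((2*N-1:ℕ):ℝ))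
        + Real.cos (2 * Real.pi * (((a:ℤ) + b + 1 : ℤ) : ℝ) * s / ((2*N-1:ℕ):ℝ))) / 2 := by
    intro s
    have key := Real.two_mul_cos_mul_cos (Real.pi * ((a:ℝ) + 1/2) * (2 * s / (2*(N:ℝ)-1)))
      (Real.pi * ((b:ℝ) + 1/2) * (2 * s / (2*(N:ℝ)-1)))
    have e1 : Real.pi * ((a:ℝ) + 1/2) * (2 * s / (2*(N:ℝ)-1))
        - Real.pi * ((b:ℝ) + 1/2) * (2 * s / (2*(N:ℝ)-1))
        = 2 * Real.pi * (((a:ℤ) - b : ℤ) : ℝ) * s / ((2*N-1:ℕ):ℝ) := by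
      rw [hMcast]; push_cast; ring
    have e2 : Real.pi * ((a:ℝ) + 1/2) * (2 * s / (2*(N:ℝ)-1))
        + Real.pi * ((b:ℝ) + 1/2) * (2 * s / (2*(N:ℝ)-1))
        = 2 * Real.pi * (((a:ℤ) + b + 1 : ℤ) : ℝ) * s / ((2*N-1:ℕ):ℝ) := by
      rw [hMcast]; push_cast; ring
    rw [e1, e2] at key
    rw [hA]
    simp only
    linarith
  have hsA : (∑ s ∈ Finset.range N, A s) - 1/2
      = (((∑ s ∈ Finset.range N,
            Real.cos (2 * Real.pi * (((a:ℤ) - b : ℤ) : ℝ) * s / ((2*N-1:ℕ):ℝ))) - 1/2)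
        + ((∑ s ∈ Finset.range N,
            Real.cos (2 * Real.pi * (((a:ℤ) + b + 1 : ℤ) : ℝ) * s / ((2*N-1:ℕ):ℝ))) - 1/2)) / 2 := by
    rw [Finset.sum_congr rfl (fun s _ => h2 s), ← Finset.sum_div, Finset.sum_add_distrib]
    ring
  rw [hsA, sum_cos_half N hN ((a:ℤ) - b), sum_cos_half N hN ((a:ℤ) + b + 1)]
  have hd1 : (((2*N-1:ℕ)):ℤ) ∣ ((a:ℤ) - b) ↔ a = b := by
    constructor
    · intro h
      by_contra hne
      have h1 : (a:ℤ) - b ≠ 0 := by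
        intro h2; apply hne; omega
      have h2 := Int.le_of_dvd (abs_pos.mpr h1) ((dvd_abs _ _).mpr h)
      have h3 : |(a:ℤ) - b| < ((2*N-1:ℕ):ℤ) := by
        rw [abs_lt]; push_cast; omega
      omega
    · rintro rfl; simp
  have hd2 : (((2*N-1:ℕ)):ℤ) ∣ ((a:ℤ) + b + 1) ↔ (a = N-1 ∧ b = N-1) := by
    constructor
    · intro h
      have h1 := Int.le_of_dvd (by push_cast; omega) h
      push_cast at h1
      constructor <;> omega
    · rintro ⟨rfl, rfl⟩
      have : (((N-1:ℕ)):ℤ) + ((N-1:ℕ):ℤ) + 1 = ((2*N-1:ℕ):ℤ) := by push_cast; omega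
      rw [this]
  simp only [hd1, hd2, hMcast]
  by_cases hab : a = b
  · subst hab
    rw [if_pos rfl, if_pos rfl]
    by_cases haN : a = N - 1
    · have hcc : cc N (a+1) = 1/2 := by
        simp only [cc]; rw [if_pos (Or.inr (by omega))]
      rw [if_pos ⟨haN, haN⟩, hcc]
      norm_num
      ring
    · have hcc : cc N (a+1) = 1 := by
        simp only [cc]; rw [if_neg (by omega)]
      rw [if_neg (by tauto), hcc]
      norm_num
      ring
  · rw [if_neg hab, if_neg hab, if_neg (by rintro ⟨rfl, rfl⟩; exact hab rfl)]
    norm_num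

lemma cosMinus_eq_det (n : ℕ) (lam x : Fin n → ℝ) :
    cosMinus n lam x = (Matrix.of fun p q : Fin n => Real.cos (Real.pi * lam p * x q)).det := by
  rw [Matrix.det_apply]
  simp [cosMinus, Units.smul_def, zsmul_eq_mul]

lemma cosMinus_zero_of_eq (n : ℕ) (lam x : Fin n → ℝ) {i j : Fin n} (hij : i ≠ j)
    (h : x i = x j) : cosMinus n lam x = 0 := by
  rw [cosMinus_eq_det]
  exact Matrix.det_zero_of_column_eq hij (fun p => by simp [h])

lemma cosMinus_permute (n : ℕ) (lam x : Fin n → ℝ) (τ : Equiv.Perm (Fin n)) :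
    cosMinus n lam (x ∘ τ) = ((Equiv.Perm.sign τ : ℤ) : ℝ) * cosMinus n lam x := by
  rw [cosMinus_eq_det, cosMinus_eq_det]
  have : (Matrix.of fun p q : Fin n => Real.cos (Real.pi * lam p * (x ∘ τ) q))
      = (Matrix.of fun p q : Fin n => Real.cos (Real.pi * lam p * x q)).submatrix id τ := by
    ext p q; simp [Matrix.submatrix]
  rw [this, Matrix.det_permute']

lemma strictAntiFin_unique {n : ℕ} {α : Type*} [LinearOrder α] {f g : Fin n → α}
    (hf : ∀ i j : Fin n, i < j → f j < f i) (hg : ∀ i j : Fin n, i < j → g j < g i)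
    (h : Set.range f = Set.range g) : f = g :=
  (StrictAnti.range_inj (fun a b hab => hf a b hab) (fun a b hab => hg a b hab)).mp h

theorem AMDCT_VII_orthogonality (n N : ℕ) (hn : 1 ≤ n) (hN : 1 ≤ N)
    (k k' : Fin n → ℕ)
    (hk : ∀ i j : Fin n, i < j → k j < k i) (hkb : ∀ i, k i ≤ N - 1)
    (hk' : ∀ i j : Fin n, i < j → k' j < k' i) (hk'b : ∀ i, k' i ≤ N - 1) :
    ∑ r ∈ Finset.univ.filter
        (fun r : Fin n → Fin N => ∀ i j : Fin n, i < j → (r j : ℕ) < (r i : ℕ)),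
      (∏ i : Fin n, cc N (r i)) *
        cosMinus n (fun i => (k i : ℝ) + 1 / 2)
          (fun i => 2 * ((r i : ℕ) : ℝ) / (2 * N - 1)) *
        cosMinus n (fun i => (k' i : ℝ) + 1 / 2)
          (fun i => 2 * ((r i : ℕ) : ℝ) / (2 * N - 1))
      = (∏ i : Fin n, cc N (k i + 1))⁻¹ * ((2 * (N : ℝ) - 1) / 4) ^ n *
          (if k = k' then (1 : ℝ) else 0) := by
  have hkN : ∀ i, k i < N := fun i => by have := hkb i; omega
  have hk'N : ∀ i, k' i < N := fun i => by have := hk'b i; omega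
  set G : (Fin n → Fin N) → ℝ := fun r =>
    (∏ i : Fin n, cc N (r i)) *
      cosMinus n (fun i => (k i : ℝ) + 1 / 2)
        (fun i => 2 * ((r i : ℕ) : ℝ) / (2 * N - 1)) *
      cosMinus n (fun i => (k' i : ℝ) + 1 / 2)
        (fun i => 2 * ((r i : ℕ) : ℝ) / (2 * N - 1)) with hGdef
  set P : (Fin n → Fin N) → Prop :=
    fun r => ∀ i j : Fin n, i < j → (r j : ℕ) < (r i : ℕ) with hPdef
  -- sign squared
  have hsgn : ∀ τ : Equiv.Perm (Fin n),
      ((Equiv.Perm.sign τ : ℤ) : ℝ) * ((Equiv.Perm.sign τ : ℤ) : ℝ) = 1 := by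
    intro τ
    have h1 := Int.units_mul_self (Equiv.Perm.sign τ)
    have h2 : ((Equiv.Perm.sign τ : ℤ)) * ((Equiv.Perm.sign τ : ℤ)) = 1 := by
      rw [← Units.val_mul, h1]; rfl
    exact_mod_cast h2
  -- G vanishes on non-injective
  have hGzero : ∀ r : Fin n → Fin N, ¬ Function.Injective r → G r = 0 := by
    intro r hr
    rw [Function.not_injective_iff] at hr
    obtain ⟨i, j, hx, hij⟩ := hr
    have h0 : cosMinus n (fun i => (k i : ℝ) + 1 / 2)
        (fun i => 2 * ((r i : ℕ) : ℝ) / (2 * N - 1)) = 0 :=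
      cosMinus_zero_of_eq n _ _ hij (by rw [hx])
    rw [hGdef]
    simp only [h0, mul_zero, zero_mul]
  -- G is symmetric
  have hGperm : ∀ (r : Fin n → Fin N) (τ : Equiv.Perm (Fin n)), G (r ∘ τ) = G r := by
    intro r τ
    rw [hGdef]
    simp only
    have hx : (fun i => 2 * (((r ∘ τ) i : ℕ) : ℝ) / (2 * (N:ℝ) - 1))
        = (fun i => 2 * ((r i : ℕ) : ℝ) / (2 * (N:ℝ) - 1)) ∘ τ := rfl
    rw [hx, cosMinus_permute, cosMinus_permute]
    have hprod : ∏ i : Fin n, cc N ((r ∘ τ) i) = ∏ i : Fin n, cc N (r i) :=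
      Equiv.prod_comp τ (fun i => cc N (r i))
    rw [hprod]
    have : ∀ (P c1 c2 s : ℝ), s * s = 1 → P * (s * c1) * (s * c2) = P * c1 * c2 := by
      intro P c1 c2 s hs
      calc P * (s * c1) * (s * c2) = (s * s) * (P * c1 * c2) := by ring
        _ = P * c1 * c2 := by rw [hs, one_mul]
    exact this _ _ _ _ (hsgn τ)
  -- decreasing implies injective
  have hinj : ∀ g : Fin n → Fin N, P g → Function.Injective g := by
    intro g hg a b hab
    by_contra hne
    rcases lt_trichotomy a b with h | h | h
    · have := hg a b h
      have h2 : ((g a : ℕ)) = (g b : ℕ) := by rw [hab]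
      omega
    · exact hne h
    · have := hg b a h
      have h2 : ((g a : ℕ)) = (g b : ℕ) := by rw [hab]
      omega
  -- split: full sum = n! * filtered sum
  have hsplit : ∑ r : Fin n → Fin N, G r
      = (n.factorial : ℝ) * ∑ r ∈ Finset.univ.filter P, G r := by
    rw [← Finset.sum_filter_add_sum_filter_not Finset.univ
      (fun r : Fin n → Fin N => Function.Injective r) G]
    rw [Finset.sum_eq_zero (fun r hr => hGzero r (Finset.mem_filter.mp hr).2), add_zero]
    have hbij : ∑ r ∈ Finset.univ.filter (fun r : Fin n → Fin N => Function.Injective r), G r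
        = ∑ p ∈ (Finset.univ.filter P) ×ˢ (Finset.univ : Finset (Equiv.Perm (Fin n))),
            G (p.1 ∘ ⇑p.2) := by
      refine Finset.sum_nbij'
        (fun r => (r ∘ ⇑(Tuple.sort r * (Fin.revPerm : Equiv.Perm (Fin n))),
          (Tuple.sort r * (Fin.revPerm : Equiv.Perm (Fin n)))⁻¹))
        (fun p => p.1 ∘ ⇑p.2) ?_ ?_ ?_ ?_ ?_
      · intro r hr
        rw [Finset.mem_filter] at hr
        have hrinj : Function.Injective r := hr.2
        rw [Finset.mem_product]
        constructor
        · rw [Finset.mem_filter]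
          refine ⟨Finset.mem_univ _, ?_⟩
          intro i j hij
          have hmono : Monotone (r ∘ ⇑(Tuple.sort r)) := Tuple.monotone_sort r
          have hsm : StrictMono (r ∘ ⇑(Tuple.sort r)) :=
            hmono.strictMono_of_injective (hrinj.comp (Equiv.injective _))
          have : (r ∘ ⇑(Tuple.sort r)) (Fin.rev j) < (r ∘ ⇑(Tuple.sort r)) (Fin.rev i) :=
            hsm (Fin.rev_lt_rev.mpr hij)
          simpa [Equiv.Perm.mul_apply] using this
        · exact Finset.mem_univ _
      · rintro ⟨g, τ⟩ hp
        rw [Finset.mem_product, Finset.mem_filter] at hp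
        rw [Finset.mem_filter]
        exact ⟨Finset.mem_univ _, (hinj g hp.1.2).comp τ.injective⟩
      · intro r _
        funext x
        simp [Equiv.Perm.mul_apply]
      · rintro ⟨g, τ⟩ hp
        rw [Finset.mem_product, Finset.mem_filter] at hp
        have hgP : P g := hp.1.2
        have hginj : Function.Injective g := hinj g hgP
        have hrinj : Function.Injective (g ∘ ⇑τ) := hginj.comp τ.injective
        set r : Fin n → Fin N := g ∘ ⇑τ with hr
        set q : Equiv.Perm (Fin n) := Tuple.sort r * (Fin.revPerm : Equiv.Perm (Fin n)) with hq
        have hPq : ∀ i j : Fin n, i < j → (r ∘ ⇑q) j < (r ∘ ⇑q) i := by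
          intro i j hij
          have hmono : Monotone (r ∘ ⇑(Tuple.sort r)) := Tuple.monotone_sort r
          have hsm : StrictMono (r ∘ ⇑(Tuple.sort r)) :=
            hmono.strictMono_of_injective (hrinj.comp (Equiv.injective _))
          have : (r ∘ ⇑(Tuple.sort r)) (Fin.rev j) < (r ∘ ⇑(Tuple.sort r)) (Fin.rev i) :=
            hsm (Fin.rev_lt_rev.mpr hij)
          simpa [hq, Equiv.Perm.mul_apply] using this
        have hgP' : ∀ i j : Fin n, i < j → g j < g i := by
          intro i j hij
          have := hgP i j hij
          exact Fin.lt_def.mpr this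
        have hrange : Set.range (r ∘ ⇑q) = Set.range g := by
          rw [Set.range_comp, Equiv.range_eq_univ, Set.image_univ, hr,
            Set.range_comp, Equiv.range_eq_univ, Set.image_univ]
        have hEq : r ∘ ⇑q = g := strictAntiFin_unique hPq hgP' hrange
        have hqval : ∀ x, q x = τ⁻¹ x := by
          intro x
          apply hrinj
          have h1 : r (q x) = g x := congrFun hEq x
          have h2 : r (τ⁻¹ x) = g x := by rw [hr]; simp
          rw [h1, h2]
        have hqeq : q = τ⁻¹ := Equiv.ext hqval
        have : r ∘ ⇑(Tuple.sort r * (Fin.revPerm : Equiv.Perm (Fin n))) = g := by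
          rw [← hq]; exact hEq
        refine Prod.ext ?_ ?_
        · simpa using hEq
        · show (Tuple.sort r * (Fin.revPerm : Equiv.Perm (Fin n)))⁻¹ = τ
          rw [← hq, hqeq]; simp
      · intro r hr
        congr 1
        funext x
        simp [Equiv.Perm.mul_apply]
    rw [hbij, Finset.sum_product, Finset.mul_sum]
    refine Finset.sum_congr rfl (fun g hg => ?_)
    rw [Finset.sum_congr rfl (fun τ _ => hGperm g τ), Finset.sum_const, Finset.card_univ,
      Fintype.card_perm]
    simp [nsmul_eq_mul]
  -- the 1D orthogonality matrix entries
  set E : ℕ → ℕ → ℝ := fun a b => ∑ s : Fin N,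
      cc N (s : ℕ) * Real.cos (Real.pi * ((a:ℝ) + 1/2) * (2 * ((s:ℕ):ℝ) / (2*(N:ℝ)-1))) *
        Real.cos (Real.pi * ((b:ℝ) + 1/2) * (2 * ((s:ℕ):ℝ) / (2*(N:ℝ)-1))) with hEdef
  have hE : ∀ a b : ℕ, a < N → b < N →
      E a b = ((2*(N:ℝ)-1)/4) * (cc N (a+1))⁻¹ * (if a = b then 1 else 0) := by
    intro a b ha hb
    simp only [hEdef]
    rw [Fin.sum_univ_eq_sum_range (fun s : ℕ =>
      cc N s * Real.cos (Real.pi * ((a:ℝ) + 1/2) * (2 * (s:ℝ) / (2*(N:ℝ)-1))) *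
        Real.cos (Real.pi * ((b:ℝ) + 1/2) * (2 * (s:ℝ) / (2*(N:ℝ)-1)))) N]
    exact oneD N hN a b ha hb
  -- expand G r as a double sum over permutations
  have hGr : ∀ r : Fin n → Fin N, G r
      = ∑ σ : Equiv.Perm (Fin n), ∑ τ : Equiv.Perm (Fin n),
          ((Equiv.Perm.sign σ : ℤ) : ℝ) * ((Equiv.Perm.sign τ : ℤ) : ℝ) *
            ∏ i : Fin n, (cc N (r i) *
              Real.cos (Real.pi * ((k (σ i) : ℝ) + 1/2) * (2 * ((r i : ℕ):ℝ) / (2*(N:ℝ)-1))) *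
              Real.cos (Real.pi * ((k' (τ i) : ℝ) + 1/2) * (2 * ((r i : ℕ):ℝ) / (2*(N:ℝ)-1)))) := by
    intro r
    simp only [hGdef, cosMinus]
    rw [mul_assoc, Finset.sum_mul_sum]
    rw [Finset.mul_sum]
    refine Finset.sum_congr rfl (fun σ _ => ?_)
    rw [Finset.mul_sum]
    refine Finset.sum_congr rfl (fun τ _ => ?_)
    rw [Finset.prod_mul_distrib, Finset.prod_mul_distrib]
    ring
  -- swap sums and factor through E
  have hswap : ∑ r : Fin n → Fin N, G r
      = ∑ σ : Equiv.Perm (Fin n), ∑ τ : Equiv.Perm (Fin n),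
          ((Equiv.Perm.sign σ : ℤ):ℝ) * ((Equiv.Perm.sign τ : ℤ):ℝ) *
            ∏ i : Fin n, E (k (σ i)) (k' (τ i)) := by
    rw [Finset.sum_congr rfl (fun r _ => hGr r)]
    rw [Finset.sum_comm]
    refine Finset.sum_congr rfl (fun σ _ => ?_)
    rw [Finset.sum_comm]
    refine Finset.sum_congr rfl (fun τ _ => ?_)
    rw [← Finset.mul_sum]
    congr 1
    have hps := Finset.prod_univ_sum (fun _ : Fin n => (univ : Finset (Fin N)))
      (fun (i : Fin n) (s : Fin N) => cc N (s : ℕ) *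
        Real.cos (Real.pi * ((k (σ i) : ℝ) + 1/2) * (2 * ((s:ℕ):ℝ) / (2*(N:ℝ)-1))) *
        Real.cos (Real.pi * ((k' (τ i) : ℝ) + 1/2) * (2 * ((s:ℕ):ℝ) / (2*(N:ℝ)-1))))
    rw [← Fintype.piFinset_univ, ← hps]
  have hreindex : ∀ σ : Equiv.Perm (Fin n),
      (∑ τ : Equiv.Perm (Fin n), ((Equiv.Perm.sign σ : ℤ):ℝ) * ((Equiv.Perm.sign τ : ℤ):ℝ) *
        ∏ i : Fin n, E (k (σ i)) (k' (τ i)))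
      = ∑ p : Equiv.Perm (Fin n), ((Equiv.Perm.sign p : ℤ):ℝ) *
          ∏ i : Fin n, E (k i) (k' (p i)) := by
    intro σ
    rw [← Equiv.sum_comp (Equiv.mulRight σ)
      (fun τ => ((Equiv.Perm.sign σ : ℤ):ℝ) * ((Equiv.Perm.sign τ : ℤ):ℝ) *
        ∏ i : Fin n, E (k (σ i)) (k' (τ i)))]
    refine Finset.sum_congr rfl (fun p _ => ?_)
    simp only [Equiv.coe_mulRight]
    have h1 : ((Equiv.Perm.sign (p * σ) : ℤ):ℝ)
        = ((Equiv.Perm.sign p : ℤ):ℝ) * ((Equiv.Perm.sign σ : ℤ):ℝ) := by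
      rw [Equiv.Perm.sign_mul]
      push_cast
      ring
    have h2 : ∏ i : Fin n, E (k (σ i)) (k' ((p * σ) i)) = ∏ i : Fin n, E (k i) (k' (p i)) := by
      rw [← Equiv.prod_comp σ (fun i => E (k i) (k' (p i)))]
      refine Finset.prod_congr rfl (fun i _ => ?_)
      rw [Equiv.Perm.mul_apply]
    rw [h1, h2]
    linear_combination ((Equiv.Perm.sign p : ℤ):ℝ) *
      (∏ i : Fin n, E (k i) (k' (p i))) * (hsgn σ)
  have hexpand : ∑ r : Fin n → Fin N, G r
      = (n.factorial : ℝ) * ∑ p : Equiv.Perm (Fin n), ((Equiv.Perm.sign p : ℤ):ℝ) *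
          ∏ i : Fin n, E (k i) (k' (p i)) := by
    rw [hswap, Finset.sum_congr rfl (fun σ _ => hreindex σ), Finset.sum_const,
      Finset.card_univ, Fintype.card_perm, Fintype.card_fin, nsmul_eq_mul]
  -- evaluate the determinant-like sum
  have hD : ∑ p : Equiv.Perm (Fin n), ((Equiv.Perm.sign p : ℤ):ℝ) *
      ∏ i : Fin n, E (k i) (k' (p i))
      = (∏ i : Fin n, cc N (k i + 1))⁻¹ * ((2 * (N : ℝ) - 1) / 4) ^ n *
          (if k = k' then (1 : ℝ) else 0) := by
    by_cases hkk : k = k'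
    · subst hkk
      rw [if_pos rfl]
      rw [Finset.sum_eq_single (1 : Equiv.Perm (Fin n))]
      · simp only [Equiv.Perm.one_apply, Equiv.Perm.sign_one]
        have hprod : ∏ i : Fin n, E (k i) (k i)
            = ((2*(N:ℝ)-1)/4) ^ n * (∏ i : Fin n, cc N (k i + 1))⁻¹ := by
          have hterm : ∀ i : Fin n, E (k i) (k i)
              = ((2*(N:ℝ)-1)/4) * (cc N (k i + 1))⁻¹ := fun i => by
            rw [hE _ _ (hkN i) (hkN i), if_pos rfl, mul_one]
          rw [Finset.prod_congr rfl (fun i _ => hterm i), Finset.prod_mul_distrib,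
            Finset.prod_const, Finset.card_univ, Fintype.card_fin, Finset.prod_inv_distrib]
        rw [hprod]
        push_cast
        ring
      · intro p _ hp1
        have hex : ∃ j, p j ≠ j := by
          by_contra hc
          push_neg at hc
          exact hp1 (Equiv.ext hc)
        obtain ⟨j, hj⟩ := hex
        have hne : k j ≠ k (p j) := by
          rcases lt_trichotomy j (p j) with h | h | h
          · have := hk j (p j) h; omega
          · exact absurd h.symm hj
          · have := hk (p j) j h; omega
        apply mul_eq_zero_of_right
        refine Finset.prod_eq_zero (Finset.mem_univ j) ?_
        rw [hE _ _ (hkN j) (hkN (p j)), if_neg hne, mul_zero]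
      · intro h
        exact absurd (Finset.mem_univ _) h
    · rw [if_neg hkk, mul_zero]
      refine Finset.sum_eq_zero (fun p _ => ?_)
      apply mul_eq_zero_of_right
      by_contra hP
      have hall := Finset.prod_ne_zero_iff.mp hP
      have hkk' : ∀ i, k i = k' (p i) := by
        intro i
        by_contra hne
        exact (hall i (Finset.mem_univ i))
          (by rw [hE _ _ (hkN i) (hk'N (p i)), if_neg hne, mul_zero])
      have hrange : Set.range k = Set.range k' := by
        rw [funext hkk']
        exact p.surjective.range_comp k'
      exact hkk (strictAntiFin_unique hk hk' hrange)
  have hfac : (n.factorial : ℝ) ≠ 0 := Nat.cast_ne_zero.mpr n.factorial_ne_zero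
  exact (mul_left_cancel₀ hfac (hsplit.symm.trans hexpand)).trans hD
end

section
/- (SMDCT VI discrete orthogonality) Let N, n ≥ 1 and let k, k' ∈ D_N^+, i.e., integer vectors with N−1 ≥ k_1 ≥ … ≥ k_n ≥ 0 and N−1 ≥ k'_1 ≥ … ≥ k'_n ≥ 0. Then Σ_{r ∈ D_N^+} (∏_{i=1}^n c_{r_i+1}) · H_r^{−1} · cos⁺_k(2(r_1+1/2)/(2N−1), …, 2(r_n+1/2)/(2N−1)) · cos⁺_{k'}(2(r_1+1/2)/(2N−1), …, 2(r_n+1/2)/(2N−1)) = (H_k / d_k) · ((2N−1)/4)^n · δ_{k,k'}. -/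
open Real Finset

/-- The symmetric multivariate cosine function
`cos⁺_λ(x) = Σ_{σ ∈ S_n} ∏_{i=1}^n cos(π λ_{σ(i)} x_i)`. -/
noncomputable def cosPlus (n : ℕ) (lam x : Fin n → ℝ) : ℝ :=
  ∑ σ : Equiv.Perm (Fin n), ∏ i : Fin n, Real.cos (Real.pi * lam (σ i) * x i)

/-- `H_k`, the order of the stabilizer of `k` under the permutation action of `S_n`
(where `σ(k)_i = k_{σ(i)}`, i.e. `σ(k) = k ∘ σ`). -/
def Hstab {n : ℕ} {α : Type*} [DecidableEq α] (k : Fin n → α) : ℕ :=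
  (Finset.univ.filter fun σ : Equiv.Perm (Fin n) => k ∘ σ = k).card

/-! ### Auxiliary lemmas -/

lemma Hstab_pos {n : ℕ} {α : Type*} [DecidableEq α] (k : Fin n → α) : 0 < Hstab k := by
  apply Finset.card_pos.mpr
  exact ⟨1, by simp⟩

lemma Hstab_comp {n : ℕ} {α : Type*} [DecidableEq α] (k : Fin n → α) (σ : Equiv.Perm (Fin n)) :
    Hstab (k ∘ σ) = Hstab k := by
  unfold Hstab
  apply Finset.card_bij' (fun τ _ => σ * τ * σ⁻¹) (fun ρ _ => σ⁻¹ * ρ * σ)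
  · intro τ hτ
    simp only [Finset.mem_filter, Finset.mem_univ, true_and] at hτ ⊢
    funext i
    have := congrFun hτ (σ⁻¹ i)
    simp only [Function.comp_apply, Equiv.Perm.mul_apply] at this ⊢
    simpa using this
  · intro ρ hρ
    simp only [Finset.mem_filter, Finset.mem_univ, true_and] at hρ ⊢
    funext i
    have := congrFun hρ (σ i)
    simp only [Function.comp_apply, Equiv.Perm.mul_apply] at this ⊢
    simpa using this
  · intro τ _; ext i; simp [Equiv.Perm.mul_apply]
  · intro ρ _; ext i; simp [Equiv.Perm.mul_apply]

lemma antitone_comp_unique {n : ℕ} {α : Type*} [LinearOrder α] (f : Fin n → α)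
    (σ : Equiv.Perm (Fin n)) (h1 : Antitone f) (h2 : Antitone (f ∘ σ)) : f ∘ σ = f := by
  have key := Tuple.unique_monotone (f := f)
    (σ := σ * (Fin.revPerm : Equiv.Perm (Fin n))) (τ := (Fin.revPerm : Equiv.Perm (Fin n)))
    (by intro i j hij
        simp only [Function.comp_apply, Equiv.Perm.mul_apply, Fin.revPerm_apply]
        exact h2 (by simpa using Fin.rev_le_rev.mpr hij))
    (by intro i j hij
        simp only [Function.comp_apply, Fin.revPerm_apply]
        exact h1 (by simpa using Fin.rev_le_rev.mpr hij))
  funext i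
  have := congrFun key (Fin.rev i)
  simpa [Equiv.Perm.mul_apply] using this

lemma exists_sort_antitone {n : ℕ} {α : Type*} [LinearOrder α] (y : Fin n → α) :
    ∃ σ : Equiv.Perm (Fin n), Antitone (y ∘ σ) := by
  refine ⟨Tuple.sort y * (Fin.revPerm : Equiv.Perm (Fin n)), ?_⟩
  intro i j hij
  simp only [Function.comp_apply, Equiv.Perm.mul_apply, Fin.revPerm_apply]
  exact Tuple.monotone_sort y (by simpa using Fin.rev_le_rev.mpr hij)

/-! ### One-dimensional orthogonality -/

lemma full_sum (N : ℕ) (hN : 1 ≤ N) (m : ℤ) (hm : m.natAbs < 2 * N - 1) (hm0 : m ≠ 0) :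
    ∑ r ∈ Finset.range (2 * N - 1),
      Real.cos (π * m * (2 * (r : ℝ) + 1) / (2 * (N : ℝ) - 1)) = 0 := by
  set M : ℕ := 2 * N - 1 with hM
  have hMpos : 0 < M := by omega
  have hMr : (M : ℝ) = 2 * (N : ℝ) - 1 := by
    rw [hM]; push_cast [Nat.cast_sub (by omega : 1 ≤ 2 * N)]; ring
  rw [← hMr]
  have hMne : (M : ℝ) ≠ 0 := Nat.cast_ne_zero.mpr hMpos.ne'
  set c : ℝ := π * m / M with hc
  have key : ∀ r : ℕ, Real.cos (π * m * (2 * (r : ℝ) + 1) / M)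
      = (Complex.exp (c * Complex.I) * (Complex.exp (2 * c * Complex.I)) ^ r).re := by
    intro r
    have : Complex.exp (c * Complex.I) * (Complex.exp (2 * c * Complex.I)) ^ r
        = Complex.exp ((↑(π * m * (2 * (r : ℝ) + 1) / M) : ℂ) * Complex.I) := by
      rw [← Complex.exp_nat_mul, ← Complex.exp_add]
      congr 1
      push_cast
      have hM0 : (M : ℂ) ≠ 0 := Nat.cast_ne_zero.mpr hMpos.ne'
      field_simp [hc]
      have hcM : (c : ℂ) * M = π * m := by rw [hc]; push_cast; exact div_mul_cancel₀ _ hM0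
      linear_combination (2 * (r : ℂ) + 1) * hcM
    rw [this, Complex.exp_ofReal_mul_I_re]
  simp_rw [key]
  rw [← Complex.re_sum, ← Finset.mul_sum]
  have hz1 : Complex.exp (2 * c * Complex.I) ≠ 1 := by
    intro h
    rw [Complex.exp_eq_one_iff] at h
    obtain ⟨q, hq⟩ := h
    have hI : ((2 * c : ℝ) : ℂ) * Complex.I = ((q : ℝ) * (2 * π) : ℝ) * Complex.I := by
      push_cast at hq ⊢; rw [hq]; ring
    have h2 : (2 * c : ℝ) = (q : ℝ) * (2 * π) :=
      Complex.ofReal_inj.mp (mul_right_cancel₀ Complex.I_ne_zero hI)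
    have h3 : (2 * π) * (m : ℝ) = (2 * π) * ((q : ℝ) * M) := by
      rw [hc] at h2
      field_simp at h2
      linear_combination (2 * π) * h2
    have h4 : (m : ℝ) = (q : ℝ) * M :=
      mul_left_cancel₀ (by positivity : (2 * π : ℝ) ≠ 0) h3
    have hmq : m = q * M := by exact_mod_cast h4
    rcases eq_or_ne q 0 with h0 | h0
    · exact hm0 (by simp [hmq, h0])
    · have h5 : (M : ℤ) ≤ |m| := by
        rw [hmq, abs_mul, abs_of_nonneg (by positivity : (0 : ℤ) ≤ (M : ℤ))]
        exact le_mul_of_one_le_left (by positivity) (Int.one_le_abs (by exact_mod_cast h0))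
      rw [Int.abs_eq_natAbs] at h5
      omega
  rw [geom_sum_eq hz1]
  have hzM : Complex.exp (2 * c * Complex.I) ^ M = 1 := by
    rw [← Complex.exp_nat_mul]
    have harg : (M : ℂ) * (2 * (c : ℂ) * Complex.I) = (m : ℂ) * (2 * (π : ℂ) * Complex.I) := by
      have : (M : ℝ) * (2 * c) = (m : ℝ) * (2 * π) := by rw [hc, mul_comm (M : ℝ), mul_assoc, div_mul_cancel₀ _ hMne]; ring
      calc (M : ℂ) * (2 * (c : ℂ) * Complex.I) = ((M : ℝ) * (2 * c) : ℝ) * Complex.I := by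
            push_cast; ring
        _ = ((m : ℝ) * (2 * π) : ℝ) * Complex.I := by rw [this]
        _ = (m : ℂ) * (2 * (π : ℂ) * Complex.I) := by push_cast; ring
    rw [harg]
    exact Complex.exp_int_mul_two_pi_mul_I m
  rw [hzM]
  simp

lemma S_sum (N : ℕ) (hN : 1 ≤ N) (m : ℤ) (hm : m.natAbs < 2 * N - 1) :
    ∑ r : Fin N, cc N ((r : ℕ) + 1) *
        Real.cos (π * m * (2 * ((r : ℕ) : ℝ) + 1) / (2 * (N : ℝ) - 1))
    = if m = 0 then (2 * (N : ℝ) - 1) / 2 else 0 := by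
  set g : ℕ → ℝ := fun r => Real.cos (π * m * (2 * (r : ℝ) + 1) / (2 * (N : ℝ) - 1)) with hg
  have hsum : ∀ h : ℕ → ℝ, ∑ x ∈ Finset.range N, h x
      = (∑ x ∈ Finset.range (N - 1), h x) + h (N - 1) := by
    intro h
    have := Finset.sum_range_succ h (N - 1)
    rwa [show (N - 1) + 1 = N by omega] at this
  have stepA : ∑ r : Fin N, cc N ((r : ℕ) + 1) * g r
      = (∑ r ∈ Finset.range (N - 1), g r) + (1 / 2) * g (N - 1) := by
    rw [Fin.sum_univ_eq_sum_range (fun r => cc N (r + 1) * g r),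
      hsum (fun r => cc N (r + 1) * g r)]
    have h1 : ∀ r ∈ Finset.range (N - 1), cc N (r + 1) * g r = g r := by
      intro r hr
      rw [Finset.mem_range] at hr
      have : cc N (r + 1) = 1 := by unfold cc; rw [if_neg]; omega
      rw [this, one_mul]
    rw [Finset.sum_congr rfl h1]
    have h2 : cc N ((N - 1) + 1) = 1 / 2 := by
      unfold cc; rw [if_pos]; right; omega
    rw [h2]
  rcases eq_or_ne m 0 with hm0 | hm0
  · subst hm0
    have hg1 : ∀ r : ℕ, g r = 1 := by
      intro r; rw [hg]; simp
    rw [if_pos rfl, stepA]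
    simp only [hg1]
    rw [Finset.sum_const, Finset.card_range]
    have : ((N - 1 : ℕ) : ℝ) = (N : ℝ) - 1 := by
      push_cast [Nat.cast_sub hN]; ring
    simp [this]; ring
  · rw [if_neg hm0]
    have hfull := full_sum N hN m hm hm0
    have hrefl : ∀ i < N - 1, g (N + i) = g (N - 2 - i) := by
      intro i hi
      simp only [hg]
      have h1 : ((N + i : ℕ) : ℝ) = (N : ℝ) + i := by push_cast; ring
      have h2 : ((N - 2 - i : ℕ) : ℝ) = (N : ℝ) - 2 - i := by
        have : (N - 2 - i : ℕ) + (2 + i) = N := by omega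
        have hc := congrArg (fun x : ℕ => (x : ℝ)) this
        push_cast at hc
        linarith
      rw [h1, h2]
      have harg : π * m * (2 * ((N : ℝ) + i) + 1) / (2 * (N : ℝ) - 1)
          = (m : ℝ) * (2 * π) - π * m * (2 * ((N : ℝ) - 2 - i) + 1) / (2 * (N : ℝ) - 1) := by
        have hMne : (2 * (N : ℝ) - 1) ≠ 0 := by
          have : (1 : ℝ) ≤ (N : ℝ) := by exact_mod_cast hN
          nlinarith
        field_simp
        ring
      rw [harg, Real.cos_int_mul_two_pi_sub]
    have stepC : ∑ r ∈ Finset.range (2 * N - 1), g r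
        = (∑ r ∈ Finset.range (N - 1), g r) + g (N - 1) + ∑ r ∈ Finset.range (N - 1), g r := by
      have hsplit : 2 * N - 1 = N + (N - 1) := by omega
      rw [hsplit, Finset.sum_range_add, hsum g]
      congr 1
      rw [Finset.sum_congr rfl (fun i hi => hrefl i (Finset.mem_range.mp hi))]
      rw [← Finset.sum_range_reflect (fun i => g (N - 2 - i))]
      apply Finset.sum_congr rfl
      intro i hi
      rw [Finset.mem_range] at hi
      congr 1
      omega
    rw [stepA]
    rw [stepC] at hfull
    linarith

lemma orth1d (N : ℕ) (hN : 1 ≤ N) (a b : ℕ) (ha : a ≤ N - 1) (hb : b ≤ N - 1) :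
    ∑ t : Fin N, cc N ((t : ℕ) + 1) *
        Real.cos (π * a * (2 * (((t : ℕ) : ℝ) + 1 / 2) / (2 * (N : ℝ) - 1))) *
        Real.cos (π * b * (2 * (((t : ℕ) : ℝ) + 1 / 2) / (2 * (N : ℝ) - 1)))
    = if a = b then (2 * (N : ℝ) - 1) / 4 * (cc N a)⁻¹ else 0 := by
  have hsplit : ∀ t : Fin N,
      cc N ((t : ℕ) + 1) *
        Real.cos (π * a * (2 * (((t : ℕ) : ℝ) + 1 / 2) / (2 * (N : ℝ) - 1))) *
        Real.cos (π * b * (2 * (((t : ℕ) : ℝ) + 1 / 2) / (2 * (N : ℝ) - 1)))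
      = (1 / 2) * (cc N ((t : ℕ) + 1) *
            Real.cos (π * ((a : ℤ) - (b : ℤ)) * (2 * ((t : ℕ) : ℝ) + 1) / (2 * (N : ℝ) - 1)))
        + (1 / 2) * (cc N ((t : ℕ) + 1) *
            Real.cos (π * ((a : ℤ) + (b : ℤ)) * (2 * ((t : ℕ) : ℝ) + 1) / (2 * (N : ℝ) - 1))) := by
    intro t
    have hNe : (2 * (N : ℝ) - 1) ≠ 0 := by
      have : (1 : ℝ) ≤ (N : ℝ) := by exact_mod_cast hN
      nlinarith
    set X : ℝ := π * a * (2 * (((t : ℕ) : ℝ) + 1 / 2) / (2 * (N : ℝ) - 1)) with hX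
    set Y : ℝ := π * b * (2 * (((t : ℕ) : ℝ) + 1 / 2) / (2 * (N : ℝ) - 1)) with hY
    have h1 : π * (((a : ℤ) : ℝ) - ((b : ℤ) : ℝ)) * (2 * ((t : ℕ) : ℝ) + 1) / (2 * (N : ℝ) - 1)
        = X - Y := by rw [hX, hY, Int.cast_natCast, Int.cast_natCast]; field_simp
    have h2 : π * (((a : ℤ) : ℝ) + ((b : ℤ) : ℝ)) * (2 * ((t : ℕ) : ℝ) + 1) / (2 * (N : ℝ) - 1)
        = X + Y := by rw [hX, hY, Int.cast_natCast, Int.cast_natCast]; field_simp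
    push_cast
    push_cast at h1 h2
    rw [h1, h2, Real.cos_sub, Real.cos_add]
    ring
  rw [Finset.sum_congr rfl (fun t _ => hsplit t), Finset.sum_add_distrib,
    ← Finset.mul_sum, ← Finset.mul_sum]
  have hS1 := S_sum N hN ((a : ℤ) - (b : ℤ)) (by omega)
  have hS2 := S_sum N hN ((a : ℤ) + (b : ℤ)) (by omega)
  push_cast at hS1 hS2
  push_cast
  rw [hS1, hS2]
  rcases eq_or_ne a b with hab | hab
  · subst hab
    rw [if_pos rfl, if_pos (by ring)]
    rcases eq_or_ne a 0 with h0 | h0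
    · subst h0
      rw [if_pos (by ring)]
      have : cc N 0 = 1 / 2 := by unfold cc; rw [if_pos]; left; rfl
      rw [this]
      ring
    · rw [if_neg (by simpa using h0)]
      have : cc N a = 1 := by unfold cc; rw [if_neg]; omega
      rw [this]
      ring
  · rw [if_neg hab, if_neg (by omega), if_neg (by omega)]
    ring

/-! ### Combinatorial reduction -/

section comb

variable {n N : ℕ}

abbrev OrdSet (n N : ℕ) : Finset (Fin n → Fin N) :=
  Finset.univ.filter (fun r : Fin n → Fin N => ∀ i j : Fin n, i ≤ j → (r j : ℕ) ≤ (r i : ℕ))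

lemma mem_OrdSet_iff (r : Fin n → Fin N) : r ∈ OrdSet n N ↔ Antitone r := by
  simp only [OrdSet, Finset.mem_filter, Finset.mem_univ, true_and]
  constructor
  · intro h i j hij; exact h i j hij
  · intro h i j hij; exact h hij

lemma fiber_snd {y r : Fin n → Fin N} {σ σ₀ : Equiv.Perm (Fin n)}
    (hσ₀ : Antitone (y ∘ σ₀)) (hr : Antitone r) (hrσ : r ∘ σ = y) : r = y ∘ σ₀ := by
  have hcomp : r ∘ (σ * σ₀) = y ∘ σ₀ := by
    funext i
    simp only [Function.comp_apply, Equiv.Perm.mul_apply]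
    exact congrFun hrσ (σ₀ i)
  have h2 : Antitone (r ∘ (σ * σ₀)) := hcomp ▸ hσ₀
  have := antitone_comp_unique r (σ * σ₀) hr h2
  rw [← this, hcomp]

lemma fiber_card (y : Fin n → Fin N) :
    ((Finset.univ ×ˢ OrdSet n N).filter
        (fun p : Equiv.Perm (Fin n) × (Fin n → Fin N) => p.2 ∘ p.1 = y)).card
      = Hstab y := by
  obtain ⟨σ₀, hσ₀⟩ := exists_sort_antitone y
  unfold Hstab
  apply Finset.card_bij' (fun p _ => σ₀ * p.1)
    (fun τ _ => (σ₀⁻¹ * τ, y ∘ σ₀))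
  · intro p hp
    simp only [Finset.mem_filter, Finset.mem_univ, Finset.mem_product, true_and] at hp ⊢
    obtain ⟨h1, h2⟩ := hp
    have hp2 : p.2 = y ∘ σ₀ := fiber_snd hσ₀ (fun i j hij => h1 i j hij) h2
    funext i
    simp only [Function.comp_apply, Equiv.Perm.mul_apply]
    calc y (σ₀ (p.1 i)) = (p.2 ∘ p.1) i := by rw [hp2]; rfl
      _ = y i := congrFun h2 i
  · intro τ hτ
    simp only [Finset.mem_filter, Finset.mem_univ, Finset.mem_product, true_and] at hτ ⊢
    constructor
    · exact fun i j hij => hσ₀ hij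
    · funext i
      simp only [Function.comp_apply, Equiv.Perm.mul_apply, Equiv.Perm.inv_def, Equiv.apply_symm_apply]
      exact congrFun hτ i
  · intro p hp
    simp only [Finset.mem_filter, Finset.mem_univ, Finset.mem_product, true_and] at hp
    obtain ⟨h1, h2⟩ := hp
    have hp2 : p.2 = y ∘ σ₀ := fiber_snd hσ₀ (fun i j hij => h1 i j hij) h2
    ext i
    · simp [Equiv.Perm.mul_apply]
    · exact congrArg Fin.val (congrFun hp2.symm i)
  · intro τ _
    simp [Equiv.Perm.mul_apply]

lemma key_reduction (G : (Fin n → Fin N) → ℝ)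
    (hG : ∀ (r : Fin n → Fin N) (σ : Equiv.Perm (Fin n)), G (r ∘ σ) = G r) :
    (n.factorial : ℝ) * ∑ r ∈ OrdSet n N, G r
      = ∑ s : Fin n → Fin N, (Hstab s : ℝ) * G s := by
  have step1 : (n.factorial : ℝ) * ∑ r ∈ OrdSet n N, G r
      = ∑ p ∈ (Finset.univ ×ˢ OrdSet n N :
          Finset (Equiv.Perm (Fin n) × (Fin n → Fin N))), G (p.2 ∘ p.1) := by
    rw [Finset.sum_product]
    have : ∀ σ : Equiv.Perm (Fin n), ∑ r ∈ OrdSet n N, G (r ∘ σ) = ∑ r ∈ OrdSet n N, G r :=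
      fun σ => Finset.sum_congr rfl (fun r _ => hG r σ)
    rw [Finset.sum_congr rfl (fun σ _ => this σ), Finset.sum_const, Finset.card_univ]
    simp [mul_comm, Fintype.card_perm]
  rw [step1, Finset.sum_comp G (fun p : Equiv.Perm (Fin n) × (Fin n → Fin N) => p.2 ∘ p.1)]
  have himg : (Finset.univ ×ˢ OrdSet n N).image
      (fun p : Equiv.Perm (Fin n) × (Fin n → Fin N) => p.2 ∘ p.1) = Finset.univ := by
    apply Finset.eq_univ_iff_forall.mpr
    intro y
    obtain ⟨σ₀, hσ₀⟩ := exists_sort_antitone y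
    apply Finset.mem_image.mpr
    refine ⟨(σ₀⁻¹, y ∘ σ₀), ?_, ?_⟩
    · simp only [Finset.mem_product, Finset.mem_univ, true_and]
      exact (mem_OrdSet_iff (y ∘ σ₀)).mpr hσ₀
    · funext i; simp
  rw [himg]
  apply Finset.sum_congr rfl
  intro y _
  rw [← fiber_card y, nsmul_eq_mul]

lemma cosPlus_comp (lam x : Fin n → ℝ) (σ : Equiv.Perm (Fin n)) :
    cosPlus n lam (fun i => x (σ i)) = cosPlus n lam x := by
  unfold cosPlus
  have step : ∀ τ : Equiv.Perm (Fin n),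
      ∏ i : Fin n, Real.cos (π * lam (τ i) * x (σ i))
        = ∏ i : Fin n, Real.cos (π * lam ((τ * σ⁻¹) i) * x i) := by
    intro τ
    apply Fintype.prod_equiv σ
    intro i
    simp [Equiv.Perm.mul_apply]
  rw [Finset.sum_congr rfl (fun τ _ => step τ)]
  exact Fintype.sum_equiv (Equiv.mulRight σ⁻¹)
    (fun τ => ∏ i : Fin n, Real.cos (π * lam ((τ * σ⁻¹) i) * x i))
    (fun τ => ∏ i : Fin n, Real.cos (π * lam (τ i) * x i))
    (fun τ => rfl)

lemma count_eq {α : Type*} [DecidableEq α] (k y : Fin n → α)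
    (τ : Equiv.Perm (Fin n)) (hτ : k ∘ τ = y) :
    (Finset.univ.filter (fun σ : Equiv.Perm (Fin n) => k ∘ σ = y)).card = Hstab y := by
  unfold Hstab
  apply Finset.card_bij' (fun σ _ => τ⁻¹ * σ) (fun ρ _ => τ * ρ)
  · intro σ hσ
    simp only [Finset.mem_filter, Finset.mem_univ, true_and] at hσ ⊢
    funext i
    simp only [Function.comp_apply, Equiv.Perm.mul_apply]
    calc y (τ⁻¹ (σ i)) = k (τ (τ⁻¹ (σ i))) := (congrFun hτ (τ⁻¹ (σ i))).symm
      _ = k (σ i) := by simp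
      _ = y i := congrFun hσ i
  · intro ρ hρ
    simp only [Finset.mem_filter, Finset.mem_univ, true_and] at hρ ⊢
    funext i
    simp only [Function.comp_apply, Equiv.Perm.mul_apply]
    calc k (τ (ρ i)) = y (ρ i) := congrFun hτ (ρ i)
      _ = y i := congrFun hρ i
  · intro σ _; ext i; simp
  · intro ρ _; ext i; simp

end comb

theorem SMDCT_VI_orthogonality (n N : ℕ) (hn : 1 ≤ n) (hN : 1 ≤ N)
    (k k' : Fin n → ℕ)
    (hk : ∀ i j : Fin n, i ≤ j → k j ≤ k i) (hkb : ∀ i, k i ≤ N - 1)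
    (hk' : ∀ i j : Fin n, i ≤ j → k' j ≤ k' i) (hk'b : ∀ i, k' i ≤ N - 1) :
    ∑ r ∈ Finset.univ.filter
        (fun r : Fin n → Fin N => ∀ i j : Fin n, i ≤ j → (r j : ℕ) ≤ (r i : ℕ)),
      (∏ i : Fin n, cc N ((r i : ℕ) + 1)) * ((Hstab r : ℝ))⁻¹ *
        cosPlus n (fun i => (k i : ℝ))
          (fun i => 2 * (((r i : ℕ) : ℝ) + 1 / 2) / (2 * N - 1)) *
        cosPlus n (fun i => (k' i : ℝ))
          (fun i => 2 * (((r i : ℕ) : ℝ) + 1 / 2) / (2 * N - 1))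
      = (Hstab k : ℝ) / (∏ i : Fin n, cc N (k i)) * ((2 * (N : ℝ) - 1) / 4) ^ n *
          (if k = k' then (1 : ℝ) else 0) := by
  classical
  set x : (Fin n → Fin N) → Fin n → ℝ :=
    fun s i => 2 * (((s i : ℕ) : ℝ) + 1 / 2) / (2 * (N : ℝ) - 1) with hx
  set F : (Fin n → Fin N) → ℝ := fun s =>
    (∏ i : Fin n, cc N ((s i : ℕ) + 1)) *
      cosPlus n (fun i => (k i : ℝ)) (x s) * cosPlus n (fun i => (k' i : ℝ)) (x s) with hF
  set G : (Fin n → Fin N) → ℝ := fun s => ((Hstab s : ℝ))⁻¹ * F s with hG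
  -- the LHS equals ∑ r ∈ OrdSet, G r
  have hLHS : ∑ r ∈ Finset.univ.filter
        (fun r : Fin n → Fin N => ∀ i j : Fin n, i ≤ j → (r j : ℕ) ≤ (r i : ℕ)),
      (∏ i : Fin n, cc N ((r i : ℕ) + 1)) * ((Hstab r : ℝ))⁻¹ *
        cosPlus n (fun i => (k i : ℝ))
          (fun i => 2 * (((r i : ℕ) : ℝ) + 1 / 2) / (2 * N - 1)) *
        cosPlus n (fun i => (k' i : ℝ))
          (fun i => 2 * (((r i : ℕ) : ℝ) + 1 / 2) / (2 * N - 1))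
      = ∑ r ∈ OrdSet n N, G r := by
    apply Finset.sum_congr rfl
    intro r _
    rw [hG, hF]
    ring
  rw [hLHS]
  -- symmetry of G
  have hGsym : ∀ (r : Fin n → Fin N) (σ : Equiv.Perm (Fin n)), G (r ∘ σ) = G r := by
    intro r σ
    have hx1 : x (r ∘ σ) = fun i => (x r) (σ i) := by
      funext i; simp [hx]
    have hcc : ∏ i : Fin n, cc N (((r ∘ σ) i : ℕ) + 1) = ∏ i : Fin n, cc N ((r i : ℕ) + 1) :=
      Equiv.prod_comp σ (fun i => cc N ((r i : ℕ) + 1))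
    simp only [hG, hF]
    rw [hx1, cosPlus_comp _ (x r) σ, cosPlus_comp _ (x r) σ, hcc, Hstab_comp]
  -- reduction to full sum
  have hred := key_reduction G hGsym
  have hHG : ∀ s : Fin n → Fin N, (Hstab s : ℝ) * G s = F s := by
    intro s
    simp only [hG]
    have h0 : (Hstab s : ℝ) ≠ 0 := Nat.cast_ne_zero.mpr (Hstab_pos s).ne'
    field_simp
  rw [Finset.sum_congr rfl (fun s _ => hHG s)] at hred
  -- expand F as a double sum over permutations of products
  set h : Equiv.Perm (Fin n) → Equiv.Perm (Fin n) → Fin n → Fin N → ℝ := fun σ τ i t =>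
    cc N ((t : ℕ) + 1) *
      Real.cos (π * (k (σ i) : ℝ) * (2 * (((t : ℕ) : ℝ) + 1 / 2) / (2 * (N : ℝ) - 1))) *
      Real.cos (π * (k' (τ i) : ℝ) * (2 * (((t : ℕ) : ℝ) + 1 / 2) / (2 * (N : ℝ) - 1)))
    with hh
  have hfact : ∀ s : Fin n → Fin N, F s
      = ∑ σ : Equiv.Perm (Fin n), ∑ τ : Equiv.Perm (Fin n), ∏ i : Fin n, h σ τ i (s i) := by
    intro s
    simp only [hF, cosPlus, hh, hx]
    rw [mul_assoc, Finset.sum_mul_sum, Finset.mul_sum]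
    apply Finset.sum_congr rfl
    intro σ _
    rw [Finset.mul_sum]
    apply Finset.sum_congr rfl
    intro τ _
    rw [Finset.prod_mul_distrib, Finset.prod_mul_distrib]
    ring
  rw [Finset.sum_congr rfl (fun s _ => hfact s), Finset.sum_comm] at hred
  rw [Finset.sum_congr rfl (fun σ (_ : σ ∈ Finset.univ) => Finset.sum_comm)] at hred
  -- factor the inner sum over s and apply 1D orthogonality
  set D : ℝ := ((2 * (N : ℝ) - 1) / 4) ^ n * (∏ i : Fin n, cc N (k i))⁻¹ with hD
  have hval : ∀ σ : Equiv.Perm (Fin n),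
      ∏ i : Fin n, ((2 * (N : ℝ) - 1) / 4 * (cc N (k (σ i)))⁻¹) = D := by
    intro σ
    rw [Finset.prod_mul_distrib, Finset.prod_const, Finset.card_univ, Fintype.card_fin, hD]
    congr 1
    rw [← Finset.prod_inv_distrib]
    exact Equiv.prod_comp σ (fun i => (cc N (k i))⁻¹)
  have hinner : ∀ σ τ : Equiv.Perm (Fin n),
      ∑ s : Fin n → Fin N, ∏ i : Fin n, h σ τ i (s i)
        = if k ∘ σ = k' ∘ τ then D else 0 := by
    intro σ τ
    rw [← Fintype.prod_sum (fun i (t : Fin N) => h σ τ i t)]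
    have horth : ∀ i : Fin n, ∑ t : Fin N, h σ τ i t
        = if k (σ i) = k' (τ i) then (2 * (N : ℝ) - 1) / 4 * (cc N (k (σ i)))⁻¹ else 0 := by
      intro i
      simp only [hh]
      exact orth1d N hN (k (σ i)) (k' (τ i)) (hkb _) (hk'b _)
    rw [Finset.prod_congr rfl (fun i _ => horth i), Fintype.prod_ite_zero]
    by_cases hc : k ∘ σ = k' ∘ τ
    · rw [if_pos hc, if_pos (show ∀ i : Fin n, k (σ i) = k' (τ i) from
        fun i => congrFun hc i), hval σ]
    · rw [if_neg hc, if_neg (show ¬ ∀ i : Fin n, k (σ i) = k' (τ i) from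
        fun hcc => hc (funext hcc))]
  rw [Finset.sum_congr rfl (fun σ (_ : σ ∈ Finset.univ) =>
    Finset.sum_congr rfl (fun τ _ => hinner σ τ))] at hred
  -- now split on k = k'
  have hfne : (n.factorial : ℝ) ≠ 0 := Nat.cast_ne_zero.mpr (Nat.factorial_ne_zero n)
  rcases eq_or_ne k k' with hkk | hkk
  · subst hkk
    rw [if_pos rfl, mul_one]
    have hcount : ∀ σ : Equiv.Perm (Fin n),
        ∑ τ : Equiv.Perm (Fin n), (if k ∘ σ = k ∘ τ then D else 0)
          = D * (Hstab k : ℝ) := by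
      intro σ
      have : ∀ τ : Equiv.Perm (Fin n), (if k ∘ σ = k ∘ τ then D else 0)
          = D * (if k ∘ τ = k ∘ σ then (1 : ℝ) else 0) := by
        intro τ
        rw [mul_ite, mul_one, mul_zero]
        exact if_congr eq_comm rfl rfl
      rw [Finset.sum_congr rfl (fun τ _ => this τ), ← Finset.mul_sum, Finset.sum_boole,
        count_eq k (k ∘ σ) σ rfl, Hstab_comp]
    rw [Finset.sum_congr rfl (fun σ (_ : σ ∈ Finset.univ) => hcount σ),
      Finset.sum_const, Finset.card_univ, Fintype.card_perm, Fintype.card_fin,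
      nsmul_eq_mul] at hred
    apply mul_left_cancel₀ hfne
    rw [hred, hD]
    field_simp
  · rw [if_neg hkk, mul_zero]
    have hzero : ∀ σ τ : Equiv.Perm (Fin n), (if k ∘ σ = k' ∘ τ then D else 0) = 0 := by
      intro σ τ
      rw [if_neg]
      intro hc
      apply hkk
      have hk'eq : k ∘ (σ * τ⁻¹) = k' := by
        funext i
        simp only [Function.comp_apply, Equiv.Perm.mul_apply]
        calc k (σ (τ⁻¹ i)) = (k ∘ σ) (τ⁻¹ i) := rfl
          _ = (k' ∘ τ) (τ⁻¹ i) := by rw [hc]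
          _ = k' i := by simp
      have hanti : Antitone (k ∘ (σ * τ⁻¹)) := by
        rw [hk'eq]; exact fun i j hij => hk' i j hij
      have := antitone_comp_unique k (σ * τ⁻¹) (fun i j hij => hk i j hij) hanti
      rw [← hk'eq, this]
    rw [Finset.sum_congr rfl (fun σ (_ : σ ∈ Finset.univ) =>
      Finset.sum_congr rfl (fun τ _ => hzero σ τ))] at hred
    simp only [Finset.sum_const_zero] at hred
    apply mul_left_cancel₀ hfne
    rw [hred, mul_zero]
end

section
/- (Jacobian of the polynomial variables) Let n ≥ 1 and for j ∈ {1,…,n} define X_j : ℝ^n → ℝ by X_j(x) = cos⁺_{(1,…,1,0,…,0)}(x), where the label has j entries equal to 1 followed by n−j entries equal to 0. Then for all x = (x_1,…,x_n) ∈ ℝ^n, the determinant of the n×n Jacobian matrix with (i,j) entry ∂X_j/∂x_i evaluated at x equals (−1)^{n(n+1)/2} · (1/2)^{n(n−1)/2} · π^n · (∏_{i=1}^n (n−i)! · i!) · 2^{n(n−1)} · ∏_{i=1}^n sin(π x_i) · ∏_{1 ≤ i < j ≤ n} sin(π(x_i + x_j)/2) · sin(π(x_i − x_j)/2). -/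
open Real Finset

/-- The polynomial variable `X_j = cos⁺_{(1,…,1,0,…,0)}` with `j+1` ones (for `j : Fin n`,
corresponding to the 1-indexed variable `X_{j+1}`). -/
noncomputable def Xvar (n : ℕ) (j : Fin n) (x : Fin n → ℝ) : ℝ :=
  cosPlus n (fun i => if i ≤ j then (1 : ℝ) else 0) x

/-- Elementary symmetric polynomial in the values `c i`, `i ∈ s`. -/
noncomputable def esym {n : ℕ} (k : ℕ) (s : Finset (Fin n)) (c : Fin n → ℝ) : ℝ :=
  ∑ t ∈ s.powersetCard k, ∏ i ∈ t, c i

lemma esym_zero {n : ℕ} (s : Finset (Fin n)) (c : Fin n → ℝ) : esym 0 s c = 1 := by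
  simp [esym]

lemma esym_insert {n : ℕ} (k : ℕ) {i : Fin n} {s : Finset (Fin n)} (hi : i ∉ s)
    (c : Fin n → ℝ) :
    esym (k + 1) (insert i s) c = esym (k + 1) s c + c i * esym k s c := by
  unfold esym
  rw [Finset.powersetCard_succ_insert hi, Finset.sum_union, Finset.sum_image, Finset.mul_sum]
  · congr 1
    refine Finset.sum_congr rfl fun t ht => ?_
    rw [Finset.prod_insert fun hit => hi ((Finset.mem_powersetCard.1 ht).1 hit)]
  · intro t ht u hu h
    have hti : i ∉ t := fun hit => hi ((Finset.mem_powersetCard.1 ht).1 hit)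
    have hui : i ∉ u := fun hit => hi ((Finset.mem_powersetCard.1 hu).1 hit)
    have := congrArg (Finset.erase · i) h
    simpa [Finset.erase_insert, hti, hui] using this
  · rw [Finset.disjoint_right]
    intro t ht ht'
    obtain ⟨u, hu, rfl⟩ := Finset.mem_image.1 ht
    exact (fun hit => hi ((Finset.mem_powersetCard.1 ht').1 hit)) (Finset.mem_insert_self i u)

lemma esym_erase {n : ℕ} (m : ℕ) (i : Fin n) (c : Fin n → ℝ) :
    esym m (Finset.univ.erase i) c
      = ∑ k ∈ Finset.range (m + 1), (-c i) ^ k * esym (m - k) Finset.univ c := by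
  induction m with
  | zero => simp [esym_zero]
  | succ m ih =>
    have hins : insert i (Finset.univ.erase i) = (Finset.univ : Finset (Fin n)) := by
      simp [Finset.insert_erase (Finset.mem_univ i)]
    have hrec := esym_insert m (Finset.notMem_erase i Finset.univ) c
    rw [hins] at hrec
    have heq : esym (m + 1) (Finset.univ.erase i) c
        = esym (m + 1) Finset.univ c - c i * esym m (Finset.univ.erase i) c := by
      linarith [hrec]
    rw [heq, ih, Finset.mul_sum,
      Finset.sum_range_succ' (fun k => (-c i) ^ k * esym (m + 1 - k) Finset.univ c)]
    simp only [pow_zero, one_mul, Nat.sub_zero]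
    have hsum : ∀ k ∈ Finset.range (m + 1),
        (-c i) ^ (k + 1) * esym (m + 1 - (k + 1)) Finset.univ c
          = -(c i * ((-c i) ^ k * esym (m - k) Finset.univ c)) := by
      intro k hk
      have : m + 1 - (k + 1) = m - k := by omega
      rw [this]; ring
    rw [Finset.sum_congr rfl hsum, Finset.sum_neg_distrib]
    ring


def permFiberEquiv {n : ℕ} (j : Fin n) (t : Finset (Fin n)) :
    {σ : Equiv.Perm (Fin n) // ∀ i, (σ i ≤ j ↔ i ∈ t)} ≃
      ({i : Fin n // i ∈ t} ≃ {i : Fin n // i ≤ j}) ×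
        ({i : Fin n // ¬ i ∈ t} ≃ {i : Fin n // ¬ i ≤ j}) where
  toFun σ := (σ.1.subtypeEquiv fun i => (σ.2 i).symm,
              σ.1.subtypeEquiv fun i => not_congr (σ.2 i).symm)
  invFun fg := ⟨(Equiv.sumCompl (· ∈ t)).symm.trans
      ((fg.1.sumCongr fg.2).trans (Equiv.sumCompl (· ≤ j))), by
    intro i
    by_cases h : i ∈ t
    · simp only [Equiv.trans_apply, Equiv.sumCompl_symm_apply_of_pos h,
        Equiv.sumCongr_apply, Sum.map_inl, Equiv.sumCompl_apply_inl]
      exact ⟨fun _ => h, fun _ => (fg.1 ⟨i, h⟩).2⟩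
    · simp only [Equiv.trans_apply, Equiv.sumCompl_symm_apply_of_neg h,
        Equiv.sumCongr_apply, Sum.map_inr, Equiv.sumCompl_apply_inr]
      exact ⟨fun hle => absurd hle (fg.2 ⟨i, h⟩).2, fun hit => absurd hit h⟩⟩
  left_inv σ := by
    ext i
    by_cases h : i ∈ t
    · simp [Equiv.sumCompl_symm_apply_of_pos h]
    · simp [Equiv.sumCompl_symm_apply_of_neg h]
  right_inv fg := by
    ext i
    · simp [Equiv.sumCompl_symm_apply_of_pos i.2]
    · simp [Equiv.sumCompl_symm_apply_of_neg i.2]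

lemma card_permFiber {n : ℕ} (j : Fin n) (t : Finset (Fin n))
    (ht : t.card = (j : ℕ) + 1) :
    Fintype.card {σ : Equiv.Perm (Fin n) // ∀ i, (σ i ≤ j ↔ i ∈ t)}
      = ((j : ℕ) + 1).factorial * (n - ((j : ℕ) + 1)).factorial := by
  rw [Fintype.card_congr (permFiberEquiv j t), Fintype.card_prod]
  have h1 : Fintype.card {i : Fin n // i ∈ t} = (j : ℕ) + 1 := by
    rw [Fintype.card_coe]; exact ht
  have h2 : Fintype.card {i : Fin n // i ≤ j} = (j : ℕ) + 1 := by
    rw [Fintype.card_subtype]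
    have : Finset.univ.filter (· ≤ j) = Finset.Iic j := by ext; simp
    rw [this]; simp
  have h3 : Fintype.card {i : Fin n // ¬ i ∈ t} = n - ((j : ℕ) + 1) := by
    rw [Fintype.card_subtype_compl, h1, Fintype.card_fin]
  have h4 : Fintype.card {i : Fin n // ¬ i ≤ j} = n - ((j : ℕ) + 1) := by
    rw [Fintype.card_subtype_compl, h2, Fintype.card_fin]
  rw [Fintype.card_equiv (Fintype.equivOfCardEq (h1.trans h2.symm)),
    Fintype.card_equiv (Fintype.equivOfCardEq (h3.trans h4.symm)), h1, h3]


lemma Xvar_eq {n : ℕ} (j : Fin n) (x : Fin n → ℝ) :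
    Xvar n j x = (((n - ((j : ℕ) + 1)).factorial * ((j : ℕ) + 1).factorial : ℕ) : ℝ)
      * esym ((j : ℕ) + 1) Finset.univ (fun i => Real.cos (Real.pi * x i)) := by
  set c : Fin n → ℝ := fun i => Real.cos (Real.pi * x i) with hc
  have hterm : ∀ σ : Equiv.Perm (Fin n),
      (∏ i : Fin n, Real.cos (Real.pi * (if σ i ≤ j then (1 : ℝ) else 0) * x i))
        = ∏ i ∈ Finset.univ.filter (fun i => σ i ≤ j), c i := by
    intro σ
    rw [Finset.prod_filter]
    refine Finset.prod_congr rfl fun i _ => ?_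
    by_cases h : σ i ≤ j <;> simp [h, hc]
  have hcard : ∀ σ : Equiv.Perm (Fin n),
      (Finset.univ.filter (fun i => σ i ≤ j)) = (Finset.Iic j).map σ.symm.toEmbedding := by
    intro σ
    ext i
    simp [Equiv.symm_apply_eq, eq_comm]
  have hmaps : ∀ σ : Equiv.Perm (Fin n), σ ∈ (Finset.univ : Finset (Equiv.Perm (Fin n))) →
      (Finset.univ.filter (fun i => σ i ≤ j)) ∈
        Finset.powersetCard ((j : ℕ) + 1) (Finset.univ : Finset (Fin n)) := by
    intro σ _
    rw [Finset.mem_powersetCard_univ, hcard σ, Finset.card_map]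
    simp
  unfold Xvar cosPlus
  rw [Finset.sum_congr rfl fun σ _ => hterm σ,
    ← Finset.sum_fiberwise_of_maps_to hmaps (fun σ => ∏ i ∈ Finset.univ.filter (fun i => σ i ≤ j), c i)]
  unfold esym
  rw [Finset.mul_sum]
  refine Finset.sum_congr rfl fun t ht => ?_
  have htc : t.card = (j : ℕ) + 1 := (Finset.mem_powersetCard_univ.1 ht)
  have hin : ∀ σ ∈ Finset.univ.filter
      (fun σ : Equiv.Perm (Fin n) => Finset.univ.filter (fun i => σ i ≤ j) = t),
      (∏ i ∈ Finset.univ.filter (fun i => σ i ≤ j), c i) = ∏ i ∈ t, c i := by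
    intro σ hσ
    rw [(Finset.mem_filter.1 hσ).2]
  rw [Finset.sum_congr rfl hin, Finset.sum_const, nsmul_eq_mul]
  congr 1
  have hiff : ∀ σ : Equiv.Perm (Fin n),
      (Finset.univ.filter (fun i => σ i ≤ j) = t) ↔ ∀ i, (σ i ≤ j ↔ i ∈ t) := by
    intro σ
    constructor
    · intro h i
      rw [← h]; simp
    · intro h
      ext i
      simp [h i]
  have : (Finset.univ.filter
      (fun σ : Equiv.Perm (Fin n) => Finset.univ.filter (fun i => σ i ≤ j) = t)).card
      = Fintype.card {σ : Equiv.Perm (Fin n) // ∀ i, (σ i ≤ j ↔ i ∈ t)} := by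
    rw [Fintype.card_subtype]
    congr 1
    exact Finset.filter_congr fun σ _ => by rw [hiff σ]
  rw [this, card_permFiber j t htc]
  push_cast
  ring


section deriv

variable {n : ℕ}

noncomputable def dcos (x : Fin n → ℝ) (i : Fin n) : (Fin n → ℝ) →L[ℝ] ℝ :=
  (-Real.sin (Real.pi * x i)) • (Real.pi • (ContinuousLinearMap.proj i))

lemma hasFDerivAt_cosPi (i : Fin n) (x : Fin n → ℝ) :
    HasFDerivAt (fun y : Fin n → ℝ => Real.cos (Real.pi * y i)) (dcos x i) x := by
  have h1 : HasFDerivAt (fun y : Fin n → ℝ => y i)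
      (ContinuousLinearMap.proj i : (Fin n → ℝ) →L[ℝ] ℝ) x :=
    hasFDerivAt_apply i x
  have h2 := h1.const_mul Real.pi
  exact h2.cos

noncomputable def desym (k : ℕ) (x : Fin n → ℝ) : (Fin n → ℝ) →L[ℝ] ℝ :=
  ∑ t ∈ Finset.powersetCard k (Finset.univ : Finset (Fin n)),
    ∑ i ∈ t, (∏ i' ∈ t.erase i, Real.cos (Real.pi * x i')) • dcos x i

lemma hasFDerivAt_esymCos (k : ℕ) (x : Fin n → ℝ) :
    HasFDerivAt (fun y : Fin n → ℝ => esym k Finset.univ (fun i => Real.cos (Real.pi * y i)))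
      (desym k x) x := by
  unfold esym desym
  exact HasFDerivAt.fun_sum fun t _ =>
    HasFDerivAt.finset_prod fun i _ => hasFDerivAt_cosPi i x

lemma sum_erase_powersetCard (k : ℕ) (i0 : Fin n) (c : Fin n → ℝ) :
    ∑ t ∈ (Finset.powersetCard (k + 1) (Finset.univ : Finset (Fin n))).filter (fun t => i0 ∈ t),
        ∏ i ∈ t.erase i0, c i
      = esym k (Finset.univ.erase i0) c := by
  unfold esym
  refine Finset.sum_nbij' (fun t => t.erase i0) (fun u => insert i0 u) ?_ ?_ ?_ ?_ ?_
  · intro t ht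
    have h1 := Finset.mem_filter.1 ht
    have h2 := Finset.mem_powersetCard_univ.1 h1.1
    rw [Finset.mem_powersetCard]
    exact ⟨Finset.erase_subset_erase i0 (Finset.subset_univ t),
      by rw [Finset.card_erase_of_mem h1.2, h2]; rfl⟩
  · intro u hu
    have h := Finset.mem_powersetCard.1 hu
    have hi0 : i0 ∉ u := fun hm => (Finset.notMem_erase i0 _) (h.1 hm)
    rw [Finset.mem_filter, Finset.mem_powersetCard_univ, Finset.card_insert_of_notMem hi0, h.2]
    exact ⟨rfl, Finset.mem_insert_self i0 u⟩
  · intro t ht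
    exact Finset.insert_erase (Finset.mem_filter.1 ht).2
  · intro u hu
    have h := Finset.mem_powersetCard.1 hu
    exact Finset.erase_insert fun hm => (Finset.notMem_erase i0 _) (h.1 hm)
  · intro t ht
    rfl

lemma desym_apply_single (k : ℕ) (x : Fin n → ℝ) (i0 : Fin n) :
    desym (k + 1) x (Pi.single i0 1)
      = (-(Real.pi * Real.sin (Real.pi * x i0)))
        * esym k (Finset.univ.erase i0) (fun i => Real.cos (Real.pi * x i)) := by
  unfold desym
  rw [ContinuousLinearMap.sum_apply]
  have hterm : ∀ t ∈ Finset.powersetCard (k + 1) (Finset.univ : Finset (Fin n)),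
      (∑ i ∈ t, (∏ i' ∈ t.erase i, Real.cos (Real.pi * x i')) • dcos x i) (Pi.single i0 1)
        = if i0 ∈ t then
            (-(Real.pi * Real.sin (Real.pi * x i0)))
              * ∏ i' ∈ t.erase i0, Real.cos (Real.pi * x i') else 0 := by
    intro t _
    rw [ContinuousLinearMap.sum_apply]
    have : ∀ i ∈ t, ((∏ i' ∈ t.erase i, Real.cos (Real.pi * x i')) • dcos x i)
        (Pi.single i0 1)
        = if i = i0 then
            (-(Real.pi * Real.sin (Real.pi * x i0)))
              * ∏ i' ∈ t.erase i0, Real.cos (Real.pi * x i') else 0 := by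
      intro i _
      rw [ContinuousLinearMap.smul_apply]
      unfold dcos
      rw [ContinuousLinearMap.smul_apply, ContinuousLinearMap.smul_apply,
        ContinuousLinearMap.proj_apply, Pi.single_apply]
      by_cases h : i = i0
      · subst h; simp; ring
      · simp [h]
    rw [Finset.sum_congr rfl this, Finset.sum_ite_eq' t i0]
  rw [Finset.sum_congr rfl hterm, Finset.sum_ite, Finset.sum_const_zero, add_zero,
    ← Finset.mul_sum, sum_erase_powersetCard k i0 (fun i => Real.cos (Real.pi * x i))]

lemma fderiv_Xvar (j : Fin n) (x : Fin n → ℝ) (i0 : Fin n) :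
    fderiv ℝ (Xvar n j) x (Pi.single i0 1)
      = (((n - ((j : ℕ) + 1)).factorial * ((j : ℕ) + 1).factorial : ℕ) : ℝ)
        * ((-(Real.pi * Real.sin (Real.pi * x i0)))
          * esym (j : ℕ) (Finset.univ.erase i0) (fun i => Real.cos (Real.pi * x i))) := by
  have hfun : Xvar n j = fun y : Fin n → ℝ =>
      (((n - ((j : ℕ) + 1)).factorial * ((j : ℕ) + 1).factorial : ℕ) : ℝ)
        * esym ((j : ℕ) + 1) Finset.univ (fun i => Real.cos (Real.pi * y i)) := by
    funext y
    exact Xvar_eq j y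
  have hd := (hasFDerivAt_esymCos ((j : ℕ) + 1) x).const_mul
    (((n - ((j : ℕ) + 1)).factorial * ((j : ℕ) + 1).factorial : ℕ) : ℝ)
  rw [← hfun] at hd
  rw [hd.fderiv, ContinuousLinearMap.smul_apply, desym_apply_single, smul_eq_mul]

end deriv


lemma det_esym_matrix {n : ℕ} (c : Fin n → ℝ) :
    (Matrix.of fun i j : Fin n => esym (j : ℕ) (Finset.univ.erase i) c).det
      = ∏ i : Fin n, ∏ j ∈ Finset.Ioi i, (c i - c j) := by
  set W : Matrix (Fin n) (Fin n) ℝ := Matrix.vandermonde (fun i => -c i) with hW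
  set T : Matrix (Fin n) (Fin n) ℝ := Matrix.of fun k j : Fin n =>
    if (k : ℕ) ≤ (j : ℕ) then esym ((j : ℕ) - (k : ℕ)) Finset.univ c else 0 with hT
  have hfact : (Matrix.of fun i j : Fin n => esym (j : ℕ) (Finset.univ.erase i) c) = W * T := by
    ext i j
    rw [Matrix.mul_apply]
    simp only [hW, hT, Matrix.vandermonde, Matrix.of_apply]
    rw [Fin.sum_univ_eq_sum_range
      (fun k => (-c i) ^ k * if k ≤ (j : ℕ) then esym ((j : ℕ) - k) Finset.univ c else 0) n]
    have hsub : Finset.range ((j : ℕ) + 1) ⊆ Finset.range n := by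
      apply Finset.range_subset_range.2
      omega
    rw [← Finset.sum_subset hsub (fun k _ hk => by
      have : ¬ k ≤ (j : ℕ) := by
        simp only [Finset.mem_range] at hk
        omega
      simp [this])]
    rw [esym_erase]
    refine Finset.sum_congr rfl fun k hk => ?_
    have : k ≤ (j : ℕ) := by
      simp only [Finset.mem_range] at hk
      omega
    simp [this]
  rw [hfact, Matrix.det_mul]
  have hdetT : T.det = 1 := by
    have htri : T.BlockTriangular id := by
      intro k j hkj
      simp only [hT, Matrix.of_apply]
      have : ¬ (k : ℕ) ≤ (j : ℕ) := by
        simp only [id] at hkj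
        exact not_le.2 hkj
      simp [this]
    rw [Matrix.det_of_upperTriangular htri]
    refine Finset.prod_eq_one fun k _ => ?_
    simp [hT, esym_zero]
  rw [hdetT, mul_one, Matrix.det_vandermonde]
  refine Finset.prod_congr rfl fun i _ => Finset.prod_congr rfl fun j _ => by ring


theorem jacobian_of_Xvars (n : ℕ) (hn : 1 ≤ n) (x : Fin n → ℝ) :
    (Matrix.of fun i j : Fin n => fderiv ℝ (Xvar n j) x (Pi.single i 1)).det
      = (-1 : ℝ) ^ (n * (n + 1) / 2) * (1 / 2 : ℝ) ^ (n * (n - 1) / 2) *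
          Real.pi ^ n *
          (∏ i : Fin n,
            ((Nat.factorial (n - ((i : ℕ) + 1)) * Nat.factorial ((i : ℕ) + 1) : ℕ) : ℝ)) *
          ((2 : ℝ) ^ (n * (n - 1)) *
            (∏ i : Fin n, Real.sin (Real.pi * x i)) *
            ∏ i : Fin n, ∏ j ∈ Finset.Ioi i,
              Real.sin (Real.pi * (x i + x j) / 2) *
                Real.sin (Real.pi * (x i - x j) / 2)) := by
  set c : Fin n → ℝ := fun i => Real.cos (Real.pi * x i) with hc
  set N : Matrix (Fin n) (Fin n) ℝ :=
    Matrix.of fun i j : Fin n => esym (j : ℕ) (Finset.univ.erase i) c with hN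
  set K : Fin n → ℝ := fun j =>
    (((n - ((j : ℕ) + 1)).factorial * ((j : ℕ) + 1).factorial : ℕ) : ℝ) with hK
  -- Step 1: the Jacobian matrix factorization
  have hmat : (Matrix.of fun i j : Fin n => fderiv ℝ (Xvar n j) x (Pi.single i 1))
      = Matrix.of fun i j : Fin n =>
          K j * (Matrix.of fun i j : Fin n =>
            (-(Real.pi * Real.sin (Real.pi * x i))) * N i j) i j := by
    ext i j
    simp only [Matrix.of_apply]
    rw [fderiv_Xvar]
    rfl
  rw [hmat, Matrix.det_mul_row, Matrix.det_mul_column, det_esym_matrix]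
  -- Step 2: the row factor product
  have hrow : (∏ i : Fin n, (-(Real.pi * Real.sin (Real.pi * x i))))
      = (-1 : ℝ) ^ n * Real.pi ^ n * ∏ i : Fin n, Real.sin (Real.pi * x i) := by
    rw [show (fun i : Fin n => -(Real.pi * Real.sin (Real.pi * x i)))
        = fun i : Fin n => ((-1) * Real.pi) * Real.sin (Real.pi * x i) from by
      funext i; ring]
    rw [Finset.prod_mul_distrib, Finset.prod_const, Finset.card_univ, Fintype.card_fin,
      mul_pow]
  -- Step 3: rewrite each cosine difference
  have hdiff : ∀ i : Fin n, ∀ j ∈ Finset.Ioi i, c i - c j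
      = (-2 : ℝ) * (Real.sin (Real.pi * (x i + x j) / 2)
          * Real.sin (Real.pi * (x i - x j) / 2)) := by
    intro i j _
    simp only [hc]
    rw [Real.cos_sub_cos]
    have h1 : (Real.pi * x i + Real.pi * x j) / 2 = Real.pi * (x i + x j) / 2 := by ring
    have h2 : (Real.pi * x i - Real.pi * x j) / 2 = Real.pi * (x i - x j) / 2 := by ring
    rw [h1, h2]
    ring
  have hP : ∑ i : Fin n, (Finset.Ioi i).card = n * (n - 1) / 2 := by
    have h1 : ∀ i : Fin n, (Finset.Ioi i).card = n - 1 - (i : ℕ) := by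
      intro i; simp
    rw [Finset.sum_congr rfl fun i _ => h1 i,
      Fin.sum_univ_eq_sum_range (fun k => n - 1 - k) n, Finset.sum_range_reflect (fun k => k) n]
    have := Finset.sum_range_id_mul_two n
    omega
  have hpairs : (∏ i : Fin n, ∏ j ∈ Finset.Ioi i, (c i - c j))
      = (-2 : ℝ) ^ (n * (n - 1) / 2)
        * ∏ i : Fin n, ∏ j ∈ Finset.Ioi i,
            (Real.sin (Real.pi * (x i + x j) / 2) * Real.sin (Real.pi * (x i - x j) / 2)) := by
    rw [Finset.prod_congr rfl fun i _ => Finset.prod_congr rfl fun j hj => hdiff i j hj]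
    rw [show (∏ i : Fin n, ∏ j ∈ Finset.Ioi i, ((-2 : ℝ)
        * (Real.sin (Real.pi * (x i + x j) / 2) * Real.sin (Real.pi * (x i - x j) / 2))))
      = ∏ i : Fin n, (((-2 : ℝ) ^ (Finset.Ioi i).card)
        * ∏ j ∈ Finset.Ioi i,
            (Real.sin (Real.pi * (x i + x j) / 2) * Real.sin (Real.pi * (x i - x j) / 2)))
      from Finset.prod_congr rfl fun i _ => by
        rw [Finset.prod_mul_distrib, Finset.prod_const]]
    rw [Finset.prod_mul_distrib, Finset.prod_pow_eq_pow_sum, hP]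
  rw [hrow, hpairs]
  -- Step 4: arithmetic
  obtain ⟨m, rfl⟩ : ∃ m, n = m + 1 := ⟨n - 1, by omega⟩
  obtain ⟨r, hr⟩ := Nat.even_mul_succ_self m
  have e1 : (m + 1) * ((m + 1) - 1) = r + r := by
    rw [show (m + 1) * ((m + 1) - 1) = m * (m + 1) from by
      rw [Nat.add_sub_cancel]; ring, hr]
  have e2 : (m + 1) * ((m + 1) + 1) = (r + r) + 2 * (m + 1) := by
    rw [show (m + 1) * ((m + 1) + 1) = m * (m + 1) + 2 * (m + 1) from by ring, hr]
  have f1 : (m + 1) * ((m + 1) - 1) / 2 = r := by omega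
  have f2 : (m + 1) * ((m + 1) + 1) / 2 = (m + 1) + r := by omega
  have f3 : (m + 1) * ((m + 1) - 1) = 2 * r := by omega
  rw [f1, f2, f3]
  have h2P : (2 : ℝ) ^ r ≠ 0 := pow_ne_zero _ two_ne_zero
  rw [pow_add, neg_pow (2 : ℝ) r,
    show ((1 : ℝ) / 2) ^ r = ((2 : ℝ) ^ r)⁻¹ from by rw [one_div, inv_pow],
    show (2 : ℝ) ^ (2 * r) = (2 : ℝ) ^ r * (2 : ℝ) ^ r from by rw [two_mul, pow_add]]
  field_simp
  ring
end
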